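/- For every odd n ≥ 3, the cycle C_n satisfies sn(C_n) = (n+1)/2. -/

import Mathlib

open SimpleGraph

/-- `C₀` is a Sudoku coloring of `G` on the vertex set `S`, with colors in `Fin k`:
there is exactly one proper `k`-coloring of `G` that restricts to `C₀` on `S`.
(Note that such a `C₀` is automatically a proper coloring of the induced subgraph `G[S]`.) -/
def IsSudokuColoring {V : Type*} (G : SimpleGraph V) (k : ℕ) (S : Set V)
    (C₀ : V → Fin k) : Prop :=
  ∃! c : G.Coloring (Fin k), ∀ v ∈ S, c v = C₀ v

/-- The Sudoku number of a finite graph `G`: the minimum cardinality of a set `S` of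
vertices carrying a Sudoku coloring of `G` (with `k = χ(G)` colors). -/
noncomputable def sudokuNumber {V : Type*} [Fintype V] (G : SimpleGraph V) : ℕ :=
  sInf {n | ∃ (S : Finset V) (C₀ : V → Fin G.chromaticNumber.toNat),
    IsSudokuColoring G G.chromaticNumber.toNat S C₀ ∧ S.card = n}

namespace SNaux
section basic
variable {n : ℕ} [NeZero n] (hn : 3 ≤ n)
include hn

lemma val_one : (1 : Fin n).val = 1 := by
  have h : (1 : Fin n).val = 1 % n := rfl
  rw [h, Nat.mod_eq_of_lt (by omega)]

lemma val_two : (2 : Fin n).val = 2 := by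
  have h : (2 : Fin n).val = 2 % n := rfl
  rw [h, Nat.mod_eq_of_lt (by omega)]

lemma sub_val_one {a b : Fin n} (h : a.val = b.val + 1) : (a - b).val = 1 := by
  rw [Fin.sub_def]
  show (n - b.val + a.val) % n = 1
  have hb := b.isLt
  have h2 : n - b.val + a.val = n + 1 := by omega
  rw [h2, Nat.add_mod_left, Nat.mod_eq_of_lt (by omega)]

lemma adj_succ {a b : Fin n} (h : b.val = a.val + 1) : (cycleGraph n).Adj a b := by
  rw [cycleGraph_adj']
  exact Or.inr (sub_val_one hn h)

lemma adj_wrap {a b : Fin n} (ha : a.val = n - 1) (hb : b.val = 0) :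
    (cycleGraph n).Adj a b := by
  rw [cycleGraph_adj']
  right
  rw [Fin.sub_def]
  show (n - a.val + b.val) % n = 1
  have h2 : n - a.val + b.val = 1 := by omega
  rw [h2, Nat.mod_eq_of_lt (by omega)]

lemma succ_cases {a b : Fin n} (h : (b - a).val = 1) :
    b.val = a.val + 1 ∨ (a.val = n - 1 ∧ b.val = 0) := by
  rw [Fin.sub_def] at h
  have h' : (n - a.val + b.val) % n = 1 := h
  have ha := a.isLt; have hb := b.isLt
  rcases Nat.lt_or_ge (n - a.val + b.val) n with h1 | h1
  · rw [Nat.mod_eq_of_lt h1] at h'; omega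
  · rw [Nat.mod_eq_sub_mod h1, Nat.mod_eq_of_lt (by omega)] at h'; omega

open Fin.CommRing in
lemma adj_iff {a b : Fin n} : (cycleGraph n).Adj a b ↔ b = a - 1 ∨ b = a + 1 := by
  rw [cycleGraph_adj']
  constructor
  · rintro (h | h)
    · left
      have h2 : a - b = 1 := Fin.ext (by rw [val_one hn]; exact h)
      have h3 : a - (a - b) = a - 1 := by rw [h2]
      rw [← h3]; ring_nf
    · right
      have h2 : b - a = 1 := Fin.ext (by rw [val_one hn]; exact h)
      have h3 : a + (b - a) = a + 1 := by rw [h2]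
      rw [← h3]; ring_nf
  · rintro (h | h)
    · left; rw [h, sub_sub_cancel, val_one hn]
    · right; rw [h, add_sub_cancel_left, val_one hn]

lemma one_ne_zero' : (1 : Fin n) ≠ 0 := by
  intro h
  have h2 := congrArg Fin.val h
  rw [val_one hn] at h2
  simp at h2

lemma two_ne_zero' : (2 : Fin n) ≠ 0 := by
  intro h
  have h2 := congrArg Fin.val h
  rw [val_two hn] at h2
  simp at h2

end basic
end SNaux
open SimpleGraph

namespace SNaux

def eC (m j : ℕ) : Fin 3 := if j = m then 2 else ⟨j % 2, by omega⟩

def cC (m i : ℕ) : Fin 3 :=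
  if i % 2 = 0 then eC m (i / 2) else -(eC m (i / 2) + eC m (i / 2 + 1))

lemma third_ne : ∀ {a b : Fin 3}, a ≠ b → -(a + b) ≠ a ∧ -(a + b) ≠ b := by decide

lemma uniq3 : ∀ {a b x : Fin 3}, a ≠ b → x ≠ a → x ≠ b → x = -(a + b) := by decide

lemma eC_ne {m j : ℕ} (hj : j < m) : eC m j ≠ eC m (j + 1) := by
  unfold eC
  split_ifs with h1 h2 h2
  · omega
  · intro h; have := congrArg Fin.val h; simp at this; omega
  · intro h; have := congrArg Fin.val h; simp at this; omega
  · intro h; have := congrArg Fin.val h; simp only [] at this; omega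

lemma cC_even (m j : ℕ) : cC m (2 * j) = eC m j := by
  unfold cC
  rw [if_pos (Nat.mul_mod_right 2 j), Nat.mul_div_cancel_left j (by norm_num)]

lemma cC_odd (m j : ℕ) : cC m (2 * j + 1) = -(eC m j + eC m (j + 1)) := by
  unfold cC
  have h1 : (2 * j + 1) % 2 = 1 := by omega
  have h2 : (2 * j + 1) / 2 = j := by omega
  rw [h1, h2]
  norm_num

lemma cC_step {m : ℕ} (hm : 1 ≤ m) {i : ℕ} (hi : i + 1 < 2 * m + 1) :
    cC m i ≠ cC m (i + 1) := by
  rcases Nat.even_or_odd i with ⟨j, hj⟩ | ⟨j, hj⟩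
  · have hjm : j < m := by omega
    subst hj
    rw [show j + j = 2 * j by ring, cC_even, cC_odd]
    exact ((third_ne (eC_ne hjm)).1).symm
  · have hjm : j < m := by omega
    subst hj
    rw [show 2 * j + 1 + 1 = 2 * (j + 1) by ring, cC_odd, cC_even]
    exact (third_ne (eC_ne hjm)).2

lemma cC_wrap {m : ℕ} (hm : 1 ≤ m) : cC m (2 * m) ≠ cC m 0 := by
  rw [cC_even, show (0:ℕ) = 2 * 0 by ring, cC_even]
  unfold eC
  rw [if_pos rfl, if_neg (by omega)]
  decide

end SNaux
namespace SNaux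
section cycle
variable {n m : ℕ} [NeZero n] (hnm : n = 2 * m + 1) (hm : 1 ≤ m)
include hnm hm

lemma col_proper : ∀ {a b : Fin n}, (cycleGraph n).Adj a b → cC m a.val ≠ cC m b.val := by
  have hn3 : 3 ≤ n := by omega
  have key : ∀ a b : Fin n, (b - a).val = 1 → cC m a.val ≠ cC m b.val := by
    intro a b h
    rcases succ_cases hn3 h with hb | ⟨ha, hb⟩
    · rw [hb]
      exact cC_step hm (by have := b.isLt; omega)
    · rw [ha, hb, show n - 1 = 2 * m by omega]
      exact cC_wrap hm
  intro a b hadj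
  rw [cycleGraph_adj'] at hadj
  rcases hadj with h | h
  · exact (key b a h).symm
  · exact key a b h

def colC : (cycleGraph n).Coloring (Fin 3) :=
  Coloring.mk (fun v => cC m v.val) (col_proper hnm hm)

lemma not_colorable_two : ¬ (cycleGraph n).Colorable 2 := by
  have hn3 : 3 ≤ n := by omega
  rintro ⟨C⟩
  have h0 : (0 : ℕ) < n := by omega
  have flip : ∀ a b z : Fin 2, a ≠ b → (b = z ↔ ¬ a = z) := by decide
  have key : ∀ i, ∀ hi : i < n, (C ⟨i, hi⟩ = C ⟨0, h0⟩ ↔ Even i) := by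
    intro i
    induction i with
    | zero => intro hi; simp
    | succ k ih =>
      intro hi
      have hk : k < n := by omega
      have hadj : (cycleGraph n).Adj ⟨k, hk⟩ ⟨k + 1, hi⟩ := adj_succ hn3 rfl
      have hne := C.valid hadj
      rw [Nat.even_add_one, ← ih hk]
      exact flip _ _ _ hne
  have hlast : C ⟨n - 1, by omega⟩ = C ⟨0, h0⟩ :=
    (key (n - 1) (by omega)).mpr ⟨m, by omega⟩
  have hadj : (cycleGraph n).Adj ⟨n - 1, by omega⟩ ⟨0, h0⟩ := adj_wrap hn3 rfl rfl
  exact C.valid hadj hlast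

lemma chrom : (cycleGraph n).chromaticNumber = 3 := by
  have h3 : (cycleGraph n).Colorable 3 := ⟨colC hnm hm⟩
  have le3 := h3.chromaticNumber_le
  have h2 : ¬ (cycleGraph n).chromaticNumber ≤ 2 := by
    intro h
    exact not_colorable_two hnm hm (chromaticNumber_le_iff_colorable.mp (by exact_mod_cast h))
  refine le_antisymm (by exact_mod_cast le3) ?_
  have := (ENat.add_one_le_iff (show (2 : ℕ∞) ≠ ⊤ by simp)).mpr (not_le.mp h2)
  exact le_of_eq_of_le (by norm_num) this

end cycle
end SNaux
namespace SNaux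
section cycle2
variable {n m : ℕ} [NeZero n] (hnm : n = 2 * m + 1) (hm : 1 ≤ m)

def SEv (n m : ℕ) [NeZero n] : Finset (Fin n) :=
  (Finset.range (m + 1)).image
    (fun j => ⟨2 * j % n, Nat.mod_lt _ (Nat.pos_of_ne_zero (NeZero.ne n))⟩)

include hnm hm

lemma SEv_card : (SEv n m).card = m + 1 := by
  rw [SEv, Finset.card_image_of_injOn, Finset.card_range]
  intro i hi j hj hij
  simp only [Finset.coe_range, Set.mem_Iio] at hi hj
  have h := congrArg Fin.val hij
  simp only at h
  rw [Nat.mod_eq_of_lt (by omega), Nat.mod_eq_of_lt (by omega)] at h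
  omega

lemma mem_SEv {j : ℕ} (hj : j ≤ m) {v : Fin n} (hv : v.val = 2 * j) : v ∈ SEv n m := by
  rw [SEv, Finset.mem_image]
  exact ⟨j, Finset.mem_range.mpr (by omega),
    Fin.ext (by simp only; rw [Nat.mod_eq_of_lt (by omega), hv])⟩

lemma sudoku_upper :
    IsSudokuColoring (cycleGraph n) 3 (SEv n m) (fun v => cC m v.val) := by
  have hn3 : 3 ≤ n := by omega
  refine ⟨colC hnm hm, fun v _ => rfl, ?_⟩
  intro y hy
  apply DFunLike.ext
  intro v
  show y v = cC m v.val
  rcases Nat.even_or_odd v.val with ⟨j, hj⟩ | ⟨j, hj⟩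
  · have hjm : j ≤ m := by have := v.isLt; omega
    exact hy v (mem_SEv hnm hm hjm (by omega))
  · have hjm : j < m := by have := v.isLt; omega
    have hv : v.val = 2 * j + 1 := by omega
    set a : Fin n := ⟨2 * j, by omega⟩ with ha_def
    set b : Fin n := ⟨2 * j + 2, by omega⟩ with hb_def
    have hadj1 : (cycleGraph n).Adj v a :=
      ((adj_succ hn3 (show v.val = a.val + 1 by rw [hv]))).symm
    have hadj2 : (cycleGraph n).Adj v b :=
      adj_succ hn3 (show b.val = v.val + 1 by rw [hv])
    have ha : y a = eC m j := by
      rw [hy a (mem_SEv hnm hm (by omega) rfl)]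
      exact cC_even m j
    have hb : y b = eC m (j + 1) := by
      rw [hy b (mem_SEv hnm hm (by omega) (show b.val = 2 * (j+1) by simp [hb_def]; omega))]
      show cC m (2 * j + 2) = _
      rw [show 2 * j + 2 = 2 * (j + 1) by ring]
      exact cC_even m (j + 1)
    have h1 := y.valid hadj1
    have h2 := y.valid hadj2
    rw [ha] at h1
    rw [hb] at h2
    rw [hv, cC_odd]
    exact uniq3 (eC_ne hjm) h1 h2

open Fin.CommRing in
lemma sudoku_lower (S : Finset (Fin n)) (C₀ : Fin n → Fin 3)
    (h : IsSudokuColoring (cycleGraph n) 3 S C₀) : m + 1 ≤ S.card := by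
  have hn3 : 3 ≤ n := by omega
  obtain ⟨c, hc, huniq⟩ := h
  have claim : ∀ v : Fin n, v ∉ S → v + 1 ∈ S := by
    intro v hv
    by_contra hw
    -- distinctness facts
    have d1 : v + 1 ≠ v := fun h => one_ne_zero' hn3 (left_eq_add.mp h.symm)
    have d4 : v + 2 ≠ v := fun h => two_ne_zero' hn3 (left_eq_add.mp h.symm)
    have d2 : v - 1 ≠ v := fun h => one_ne_zero' hn3 (sub_eq_self.mp h)
    have d3 : v - 1 ≠ v + 1 := by
      intro h
      have h2 : v = v + 2 := by
        have h5 := congrArg (· + 1) h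
        simp only [sub_add_cancel] at h5
        rw [show v + 2 = v + 1 + 1 by ring]
        exact h5
      exact two_ne_zero' hn3 (left_eq_add.mp h2)
    have d5 : v + 2 ≠ v + 1 := by
      intro h
      have h2 : (2 : Fin n) = 1 := add_left_cancel h
      have h3 := congrArg Fin.val h2
      rw [val_two hn3, val_one hn3] at h3
      omega
    -- adjacencies
    have a1 : (cycleGraph n).Adj v (v - 1) := (adj_iff hn3).mpr (Or.inl rfl)
    have a2 : (cycleGraph n).Adj v (v + 1) := (adj_iff hn3).mpr (Or.inr rfl)
    have a3 : (cycleGraph n).Adj (v + 1) (v + 2) := by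
      refine (adj_iff hn3).mpr (Or.inr ?_)
      ring
    have hcuw : c v ≠ c (v + 1) := c.valid a2
    -- generic recoloring helper
    have main : ∀ A B : Fin 3, A ≠ B → A ≠ c (v - 1) → B ≠ c (v + 2) →
        (A ≠ c v ∨ B ≠ c (v + 1)) → False := by
      intro A B hAB hA1 hB1 hdiff
      set d : Fin n → Fin 3 := fun x => if x = v then A else if x = v + 1 then B else c x
        with hd_def
      have hdu : d v = A := by simp [hd_def]
      have hdw : d (v + 1) = B := by simp [hd_def, d1]
      have hdo : ∀ x, x ≠ v → x ≠ v + 1 → d x = c x := by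
        intro x h1 h2; simp [hd_def, h1, h2]
      have hproper : ∀ {x y : Fin n}, (cycleGraph n).Adj x y → d x ≠ d y := by
        intro x y hadj0
        have hxy := hadj0.ne
        have hadj := (adj_iff hn3).mp hadj0
        by_cases hxu : x = v
        · subst hxu
          by_cases hyw : y = x + 1
          · rw [hyw, hdu, hdw]; exact hAB
          · have hy1 : y = x - 1 := by tauto
            rw [hdu, hy1, hdo _ d2 d3]
            exact hA1
        · by_cases hxw : x = v + 1
          · subst hxw
            by_cases hyu : y = v
            · rw [hyu, hdw, hdu]; exact hAB.symm
            · have hy2 : y = v + 2 := by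
                rcases hadj with h | h
                · exfalso; apply hyu; rw [h]; ring
                · rw [h]; ring
              rw [hdw, hy2, hdo _ d4 d5]
              exact hB1
          · rw [hdo _ hxu hxw]
            by_cases hyu : y = v
            · rcases hadj with h | h
              · exfalso
                apply hxw
                rw [← hyu, h]; ring
              · have hx2 : x = v - 1 := by rw [← hyu, h]; ring
                rw [hyu, hdu, hx2]
                exact hA1.symm
            · by_cases hyw : y = v + 1
              · rcases hadj with h | h
                · have hx3 : x = v + 2 := by
                    have hx4 : x = y + 1 := by rw [h]; ring
                    rw [hx4, hyw]; ring
                  rw [hyw, hdw, hx3]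
                  exact hB1.symm
                · exfalso
                  apply hxu
                  have hx4 : x = y - 1 := by rw [h]; ring
                  rw [hx4, hyw]; ring
              · rw [hdo _ hyu hyw]
                exact c.valid hadj0
      have hD : ∀ x ∈ (S : Set (Fin n)), (SimpleGraph.Coloring.mk d @hproper) x = C₀ x := by
        intro x hx
        have hxv : x ≠ v := fun e => hv (e ▸ hx)
        have hxw2 : x ≠ v + 1 := fun e => hw (e ▸ hx)
        show d x = C₀ x
        rw [hdo _ hxv hxw2]
        exact hc x hx
      have heq := huniq (SimpleGraph.Coloring.mk d @hproper) hD
      have hfun : d = ⇑c := congrArg DFunLike.coe heq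
      rcases hdiff with hA | hB
      · exact hA (by rw [← hdu, hfun])
      · exact hB (by rw [← hdw, hfun])
    -- apply main in three cases
    by_cases hq : c v = c (v + 2)
    · exact main (c v) (-(c v + c (v + 1))) (third_ne hcuw).1.symm (c.valid a1)
        (hq ▸ (third_ne hcuw).1) (Or.inr (third_ne hcuw).2)
    · by_cases hp : c (v + 1) = c (v - 1)
      · exact main (-(c v + c (v + 1))) (c (v + 1)) (third_ne hcuw).2
          (hp ▸ (third_ne hcuw).2) (c.valid a3) (Or.inl (third_ne hcuw).1)
      · exact main (c (v + 1)) (c v) hcuw.symm hp hq (Or.inl hcuw.symm)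
  -- counting
  have hmap : ∀ a ∈ Sᶜ, a + 1 ∈ S := fun a ha => claim a (Finset.mem_compl.mp ha)
  have hinj : Set.InjOn (fun x : Fin n => x + 1) ↑(Sᶜ) := fun a _ b _ h =>
    add_right_cancel h
  have hle := Finset.card_le_card_of_injOn _ hmap hinj
  have h1 : (Sᶜ).card = n - S.card := by rw [Finset.card_compl, Fintype.card_fin]
  have h2 : S.card ≤ n := by
    have h3 := Finset.card_le_univ S
    rwa [Fintype.card_fin] at h3
  omega

end cycle2
end SNaux


/-- For every odd `n ≥ 3`, the cycle `C_n` has Sudoku number `(n + 1) / 2`. -/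
theorem sudokuNumber_cycle_odd (n : ℕ) (hn : 3 ≤ n) (ho : Odd n) :
    sudokuNumber (SimpleGraph.cycleGraph n) = (n + 1) / 2 := by
  haveI : NeZero n := ⟨by omega⟩
  obtain ⟨m, hm'⟩ := ho
  have hnm : n = 2 * m + 1 := by omega
  have hm : 1 ≤ m := by omega
  have hχ : (cycleGraph n).chromaticNumber.toNat = 3 := by
    rw [SNaux.chrom hnm hm]; rfl
  unfold sudokuNumber
  rw [hχ]
  have hmem : (n + 1) / 2 ∈ {N | ∃ (S : Finset (Fin n)) (C₀ : Fin n → Fin 3),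
      IsSudokuColoring (cycleGraph n) 3 ↑S C₀ ∧ S.card = N} :=
    ⟨SNaux.SEv n m, fun v => SNaux.cC m v.val, SNaux.sudoku_upper hnm hm,
      by rw [SNaux.SEv_card hnm hm]; omega⟩
  apply le_antisymm
  · exact Nat.sInf_le hmem
  · apply le_csInf ⟨_, hmem⟩
    rintro N ⟨S, C₀, hsud, rfl⟩
    have hlow := SNaux.sudoku_lower hnm hm S C₀ hsud
    omega
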